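/- (Proposition A2, cluster version) Let N ≥ 2 and let {S_1,…,S_k} be a partition of {1,…,N} into k nonempty disjoint blocks, with a designated element j_i ∈ S_i chosen in each block. Let c : {0,1}^N → ℝ be any correlator function. For an assignment y of bits to all non-designated positions and z ∈ {0,1}^k, let x(z,y) ∈ {0,1}^N be the string whose j_i-th coordinate is z_i and whose remaining coordinates agree with y. Define S_{k,y}^±[c] = Σ_{z ∈ {0,1}^k} (−1)^{w(z)(w(z)±1)/2} c(x(z,y)). Then |S_N^+[c]| ≤ 2^{N−k} · max_{y, ε∈{+,−}} |S_{k,y}^ε[c]|; in particular, if the N parties achieve value s_N = |S_N^+[c]|, there exist y and ε with |S_{k,y}^ε[c]| ≥ s_N / 2^{N−k}. -/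

import Mathlib

/-- Hamming weight of a bit string. -/
def wt {n : ℕ} (x : Fin n → Fin 2) : ℕ := ∑ i, (x i : ℕ)

/-- The `n`-partite Svetlichny expression `S_n^+` of a correlator function. -/
def Splus {n : ℕ} (c : (Fin n → Fin 2) → ℝ) : ℝ :=
  ∑ x : Fin n → Fin 2, (-1 : ℝ) ^ (wt x * (wt x + 1) / 2) * c x

/-- Given a block assignment `B : Fin N → Fin k` and designated elements `j : Fin k → Fin N`,
the input string `x(z,y)` whose `j i`-th coordinate is `z i` and whose remaining coordinates
agree with `y`. -/
def clusterX {N k : ℕ} (B : Fin N → Fin k) (j : Fin k → Fin N)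
    (z : Fin k → Fin 2) (y : Fin N → Fin 2) : Fin N → Fin 2 :=
  fun p => if ∃ i, j i = p then z (B p) else y p

/-- The restricted `k`-partite Svetlichny expression `S_{k,y}^+` in the cluster scenario. -/
def SplusCluster {N k : ℕ} (B : Fin N → Fin k) (j : Fin k → Fin N)
    (c : (Fin N → Fin 2) → ℝ) (y : Fin N → Fin 2) : ℝ :=
  ∑ z : Fin k → Fin 2, (-1 : ℝ) ^ (wt z * (wt z + 1) / 2) * c (clusterX B j z y)

/-- The restricted `k`-partite Svetlichny expression `S_{k,y}^-` in the cluster scenario. -/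
def SminusCluster {N k : ℕ} (B : Fin N → Fin k) (j : Fin k → Fin N)
    (c : (Fin N → Fin 2) → ℝ) (y : Fin N → Fin 2) : ℝ :=
  ∑ z : Fin k → Fin 2, (-1 : ℝ) ^ (wt z * (wt z - 1) / 2) * c (clusterX B j z y)

private lemma tri_succ (n : ℕ) : (n+1)*((n+1)+1)/2 = n*(n+1)/2 + (n+1) := by
  rw [show (n+1)*((n+1)+1) = n*(n+1) + (n+1)*2 by ring,
      Nat.add_mul_div_right _ _ (by norm_num : (0:ℕ) < 2)]

private lemma tri_add (m w : ℕ) :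
    (m+w)*((m+w)+1)/2 = m*(m+1)/2 + w*(w+1)/2 + m*w := by
  induction w with
  | zero => simp
  | succ n ih =>
    have e1 : m + (n+1) = (m+n) + 1 := by omega
    rw [e1, tri_succ (m+n), ih, tri_succ n, show m*(n+1) = m*n + m from by ring]
    omega

private lemma tri_pred (m : ℕ) : m*(m+1)/2 = m*(m-1)/2 + m := by
  cases m with
  | zero => simp
  | succ n =>
    have : (n+1)*((n+1)+1) = (n+1)*((n+1)-1) + (n+1)*2 := by
      simp only [Nat.add_sub_cancel]; ring
    rw [this, Nat.add_mul_div_right _ _ (by norm_num : (0:ℕ) < 2)]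

private lemma sign_shift (m w : ℕ) :
    (-1:ℝ) ^ ((m+w)*((m+w)+1)/2) =
      (-1:ℝ) ^ (w*(w+1)/2) *
        (if w % 2 = 0 then (-1:ℝ)^(m*(m+1)/2) else (-1:ℝ)^(m*(m-1)/2)) := by
  rw [tri_add, pow_add, pow_add]
  by_cases hw : w % 2 = 0
  · have hmw : (-1:ℝ)^(m*w) = 1 :=
      Even.neg_one_pow ((Nat.even_iff.mpr hw).mul_left m)
    rw [if_pos hw, hmw]; ring
  · have hwodd : Odd w := Nat.odd_iff.mpr (by omega)
    have hmm : (-1:ℝ)^(m*(m+1)/2) * (-1:ℝ)^(m*w) = (-1:ℝ)^(m*(m-1)/2) := by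
      rcases Nat.even_or_odd m with hm | hm
      · rw [(hm.mul_right w).neg_one_pow, tri_pred, pow_add, hm.neg_one_pow]; ring
      · rw [(hm.mul hwodd).neg_one_pow, tri_pred, pow_add, hm.neg_one_pow]; ring
    rw [if_neg hw, ← hmm]; ring

/-- Proposition A2 (cluster version): for any partition of the `N` parties into `k` nonempty
blocks (block assignment `B`, designated elements `j`),
`|S_N^+[c]| ≤ 2^{N-k} · max_{y,ε} |S_{k,y}^ε[c]|`; in particular some restricted
`k`-partite Svetlichny expression achieves at least `|S_N^+[c]| / 2^{N-k}`. -/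
theorem stmt_4 (N k : ℕ) (hN : 2 ≤ N) (B : Fin N → Fin k) (hB : Function.Surjective B)
    (j : Fin k → Fin N) (hj : ∀ i, B (j i) = i) (c : (Fin N → Fin 2) → ℝ) :
    |Splus c| ≤ 2 ^ (N - k) *
      Finset.univ.sup' Finset.univ_nonempty
        (fun y : Fin N → Fin 2 =>
          max |SminusCluster B j c y| |SplusCluster B j c y|) ∧
    ∃ y : Fin N → Fin 2,
      |Splus c| / 2 ^ (N - k) ≤ |SminusCluster B j c y| ∨
        |Splus c| / 2 ^ (N - k) ≤ |SplusCluster B j c y| := by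
  classical
  have hjinj : Function.Injective j := by
    intro a b h
    have := congrArg B h
    rwa [hj, hj] at this
  have hkN : k ≤ N := by
    have := Fintype.card_le_of_injective j hjinj
    simpa using this
  set Y : Finset (Fin N → Fin 2) :=
    Finset.univ.filter (fun y => ∀ i, y (j i) = 0) with hYdef
  -- basic facts about clusterX
  have hx1 : ∀ (z : Fin k → Fin 2) (y : Fin N → Fin 2) (i : Fin k),
      clusterX B j z y (j i) = z i := by
    intro z y i
    simp only [clusterX]
    rw [if_pos ⟨i, rfl⟩, hj]
  have hx2 : ∀ (z : Fin k → Fin 2) (y : Fin N → Fin 2) (p : Fin N),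
      (¬ ∃ i, j i = p) → clusterX B j z y p = y p := by
    intro z y p hp
    simp only [clusterX]
    rw [if_neg hp]
  -- the normalization map
  set nrm : (Fin N → Fin 2) → (Fin N → Fin 2) :=
    fun x p => if ∃ i, j i = p then 0 else x p with hnrm
  set tofull : (Fin N → Fin 2) × (Fin k → Fin 2) → (Fin N → Fin 2) :=
    fun p => clusterX B j p.2 p.1 with htofull
  set back : (Fin N → Fin 2) → (Fin N → Fin 2) × (Fin k → Fin 2) :=
    fun x => (nrm x, fun i => x (j i)) with hback
  have hmemY : ∀ y, y ∈ Y ↔ ∀ i, y (j i) = 0 := by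
    intro y; simp [hYdef]
  have hto : ∀ p ∈ Y ×ˢ (Finset.univ : Finset (Fin k → Fin 2)),
      tofull p ∈ (Finset.univ : Finset (Fin N → Fin 2)) := by
    intro p _; exact Finset.mem_univ _
  have hba : ∀ x ∈ (Finset.univ : Finset (Fin N → Fin 2)),
      back x ∈ Y ×ˢ (Finset.univ : Finset (Fin k → Fin 2)) := by
    intro x _
    refine Finset.mem_product.mpr ⟨?_, Finset.mem_univ _⟩
    rw [hmemY]
    intro i
    simp only [hback, hnrm]
    rw [if_pos ⟨i, rfl⟩]
  have hli : ∀ p ∈ Y ×ˢ (Finset.univ : Finset (Fin k → Fin 2)),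
      back (tofull p) = p := by
    rintro ⟨y, z⟩ hp
    have hy : ∀ i, y (j i) = 0 := (hmemY y).mp (Finset.mem_product.mp hp).1
    simp only [hback, htofull, Prod.mk.injEq]
    constructor
    · funext p
      simp only [hnrm]
      by_cases h : ∃ i, j i = p
      · obtain ⟨i, rfl⟩ := h
        rw [if_pos ⟨i, rfl⟩, hy i]
      · rw [if_neg h, hx2 _ _ _ h]
    · funext i
      exact hx1 z y i
  have hri : ∀ x ∈ (Finset.univ : Finset (Fin N → Fin 2)),
      tofull (back x) = x := by
    intro x _
    funext p
    simp only [htofull, hback]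
    by_cases h : ∃ i, j i = p
    · obtain ⟨i, rfl⟩ := h
      rw [hx1]
    · rw [hx2 _ _ _ h]
      simp only [hnrm]
      rw [if_neg h]
  -- weight additivity
  have hwt : ∀ (z : Fin k → Fin 2) (y : Fin N → Fin 2), (∀ i, y (j i) = 0) →
      wt (clusterX B j z y) = wt z + wt y := by
    intro z y hy0
    have key : ∀ (x : Fin N → Fin 2),
        wt x = ∑ i : Fin k, (x (j i) : ℕ) +
          ∑ p ∈ (Finset.univ.image j)ᶜ, (x p : ℕ) := by
      intro x
      rw [wt, ← Finset.sum_add_sum_compl (Finset.univ.image j) (fun p => (x p : ℕ))]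
      congr 1
      rw [Finset.sum_image (fun a _ b _ h => hjinj h)]
    have h1 : ∀ i : Fin k, (clusterX B j z y (j i) : ℕ) = (z i : ℕ) := by
      intro i; rw [hx1]
    have h2 : ∀ p ∈ (Finset.univ.image j)ᶜ, (clusterX B j z y p : ℕ) = (y p : ℕ) := by
      intro p hp
      rw [hx2]
      rintro ⟨i, hi⟩
      exact (Finset.mem_compl.mp hp) (Finset.mem_image.mpr ⟨i, Finset.mem_univ i, hi⟩)
    rw [key, Finset.sum_congr rfl (fun i _ => h1 i), Finset.sum_congr rfl h2,
        key y]
    have h3 : ∑ i : Fin k, (y (j i) : ℕ) = 0 := by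
      apply Finset.sum_eq_zero
      intro i _
      rw [hy0 i]
      rfl
    rw [h3, wt]
    omega
  -- decomposition of Splus
  have hdecomp : Splus c = ∑ y ∈ Y, ∑ z : Fin k → Fin 2,
      (-1:ℝ) ^ ((wt z + wt y) * ((wt z + wt y) + 1) / 2) * c (clusterX B j z y) := by
    rw [Splus]
    rw [show (∑ x : Fin N → Fin 2, (-1:ℝ) ^ (wt x * (wt x + 1) / 2) * c x)
        = ∑ p ∈ Y ×ˢ (Finset.univ : Finset (Fin k → Fin 2)),
            (-1:ℝ) ^ (wt (tofull p) * (wt (tofull p) + 1) / 2) * c (tofull p) from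
      (Finset.sum_nbij' tofull back hto hba hli hri (fun p _ => rfl)).symm]
    rw [Finset.sum_product]
    apply Finset.sum_congr rfl
    intro y hy
    apply Finset.sum_congr rfl
    intro z _
    have hy0 : ∀ i, y (j i) = 0 := (hmemY y).mp hy
    simp only [htofull]
    rw [hwt z y hy0]
  -- cardinality of Y
  have hcard : Y.card = 2 ^ (N - k) := by
    have hbij : (Y ×ˢ (Finset.univ : Finset (Fin k → Fin 2))).card
        = (Finset.univ : Finset (Fin N → Fin 2)).card :=
      Finset.card_nbij' tofull back hto hba hli hri
    rw [Finset.card_product, Finset.card_univ, Finset.card_univ] at hbij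
    simp only [Fintype.card_fun, Fintype.card_fin] at hbij
    have h2k : (0:ℕ) < 2 ^ k := Nat.pow_pos (by norm_num)
    have hsplit : (2:ℕ) ^ N = 2 ^ (N - k) * 2 ^ k := by
      rw [← pow_add, Nat.sub_add_cancel hkN]
    rw [hsplit] at hbij
    exact Nat.eq_of_mul_eq_mul_right h2k hbij
  set M : ℝ := Finset.univ.sup' Finset.univ_nonempty
    (fun y : Fin N → Fin 2 =>
      max |SminusCluster B j c y| |SplusCluster B j c y|) with hM
  have hMy : ∀ y : Fin N → Fin 2,
      max |SminusCluster B j c y| |SplusCluster B j c y| ≤ M := by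
    intro y
    rw [hM]
    exact Finset.le_sup' (fun y : Fin N → Fin 2 =>
      max |SminusCluster B j c y| |SplusCluster B j c y|) (Finset.mem_univ y)
  -- bound the inner sum
  have hinner : ∀ y ∈ Y,
      |∑ z : Fin k → Fin 2,
        (-1:ℝ) ^ ((wt z + wt y) * ((wt z + wt y) + 1) / 2) * c (clusterX B j z y)| ≤ M := by
    intro y hy
    have hrw : ∑ z : Fin k → Fin 2,
        (-1:ℝ) ^ ((wt z + wt y) * ((wt z + wt y) + 1) / 2) * c (clusterX B j z y)
        = (-1:ℝ) ^ (wt y * (wt y + 1) / 2) *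
          (if wt y % 2 = 0 then SplusCluster B j c y else SminusCluster B j c y) := by
      by_cases hw : wt y % 2 = 0
      · rw [if_pos hw, SplusCluster, Finset.mul_sum]
        apply Finset.sum_congr rfl
        intro z _
        rw [sign_shift, if_pos hw]
        ring
      · rw [if_neg hw, SminusCluster, Finset.mul_sum]
        apply Finset.sum_congr rfl
        intro z _
        rw [sign_shift, if_neg hw]
        ring
    rw [hrw, abs_mul, abs_pow, abs_neg, abs_one, one_pow, one_mul]
    by_cases hw : wt y % 2 = 0
    · rw [if_pos hw]
      exact le_trans (le_max_right _ _) (hMy y)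
    · rw [if_neg hw]
      exact le_trans (le_max_left _ _) (hMy y)
  have hMnonneg : 0 ≤ M :=
    le_trans (abs_nonneg _) (le_trans (le_max_left _ _) (hMy (fun _ => 0)))
  have hmain : |Splus c| ≤ 2 ^ (N - k) * M := by
    rw [hdecomp]
    calc |∑ y ∈ Y, ∑ z : Fin k → Fin 2,
          (-1:ℝ) ^ ((wt z + wt y) * ((wt z + wt y) + 1) / 2) * c (clusterX B j z y)|
        ≤ ∑ y ∈ Y, |∑ z : Fin k → Fin 2,
          (-1:ℝ) ^ ((wt z + wt y) * ((wt z + wt y) + 1) / 2) * c (clusterX B j z y)| :=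
          Finset.abs_sum_le_sum_abs _ _
      _ ≤ ∑ _y ∈ Y, M := Finset.sum_le_sum hinner
      _ = Y.card * M := by rw [Finset.sum_const, nsmul_eq_mul]
      _ = 2 ^ (N - k) * M := by rw [hcard]; push_cast; ring
  refine ⟨hmain, ?_⟩
  obtain ⟨y, _, hy⟩ := Finset.exists_mem_eq_sup' Finset.univ_nonempty
    (fun y : Fin N → Fin 2 => max |SminusCluster B j c y| |SplusCluster B j c y|)
  refine ⟨y, ?_⟩
  have hpos : (0:ℝ) < 2 ^ (N - k) := by positivity
  have hle : |Splus c| / 2 ^ (N - k) ≤ M := by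
    rw [div_le_iff₀ hpos]
    linarith [hmain]
  rw [hM, hy] at hle
  exact le_max_iff.mp hle
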